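/- Pairs in SU(2) with commutator −I. If A, B ∈ SU(2) satisfy A B A⁻¹ B⁻¹ = −I, then tr(A) = tr(B) = 0 and A B = −B A. Moreover, any two such pairs are simultaneously conjugate: if (A, B) and (A', B') both satisfy this relation, then there exists U ∈ SU(2) with A' = U A U⁻¹ and B' = U B U⁻¹. Finally, the only elements of SU(2) commuting with both A and B are I and −I. -/

import Mathlib

/-- `SU(2)`: the subgroup of the unitary group `U(2)` of 2×2 complex matrices
consisting of those of determinant 1. -/
def SU2 : Subgroup (Matrix.unitaryGroup (Fin 2) ℂ) where
  carrier := {A | (A : Matrix (Fin 2) (Fin 2) ℂ).det = 1}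
  mul_mem' := by
    intro a b ha hb
    simp only [Set.mem_setOf_eq] at *
    simp [Matrix.UnitaryGroup.mul_val, Matrix.det_mul, ha, hb]
  one_mem' := by simp [Set.mem_setOf_eq]
  inv_mem' := by
    intro a ha
    simp only [Set.mem_setOf_eq] at *
    rw [Matrix.UnitaryGroup.inv_val, Matrix.star_eq_conjTranspose,
      Matrix.det_conjTranspose, ha]
    simp

/-- The underlying matrix of an element of `SU(2)`. -/
def su2Mat (A : SU2) : Matrix (Fin 2) (Fin 2) ℂ :=
  ((A : Matrix.unitaryGroup (Fin 2) ℂ) : Matrix (Fin 2) (Fin 2) ℂ)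

noncomputable section
open Matrix Complex

lemma su2Mat_mul (A B : SU2) : su2Mat (A*B) = su2Mat A * su2Mat B := rfl
lemma su2Mat_inv (A : SU2) : su2Mat A⁻¹ = star (su2Mat A) := rfl
lemma su2Mat_one : su2Mat 1 = 1 := rfl
lemma su2Mat_inj {A B : SU2} (h : su2Mat A = su2Mat B) : A = B :=
  Subtype.ext (Subtype.ext h)
lemma su2_star_mul (A : SU2) : star (su2Mat A) * su2Mat A = 1 :=
  (A : Matrix.unitaryGroup (Fin 2) ℂ).2.1
lemma su2_mul_star (A : SU2) : su2Mat A * star (su2Mat A) = 1 :=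
  (A : Matrix.unitaryGroup (Fin 2) ℂ).2.2
lemma su2_det (A : SU2) : (su2Mat A).det = 1 := A.2

/-- structural form of an SU(2) matrix -/
lemma su2_form (A : SU2) :
    su2Mat A 1 1 = star (su2Mat A 0 0) ∧ su2Mat A 1 0 = -star (su2Mat A 0 1) := by
  set M := su2Mat A with hM
  have hu : M * star M = 1 := su2_mul_star A
  have hd : M.det = 1 := su2_det A
  have hinv : M⁻¹ = star M := Matrix.inv_eq_right_inv hu
  have hadj : M * M.adjugate = 1 := by rw [Matrix.mul_adjugate, hd]; simp
  have h2 : M.adjugate = star M := by rw [← hinv]; exact (Matrix.inv_eq_right_inv hadj).symm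
  rw [Matrix.adjugate_fin_two, Matrix.star_eq_conjTranspose] at h2
  have e00 := congrFun (congrFun h2 0) 0
  have e01 := congrFun (congrFun h2 0) 1
  simp [Matrix.conjTranspose_apply] at e00 e01
  refine ⟨e00, ?_⟩
  have h := congrArg (starRingEnd ℂ) e01
  simpa [RCLike.star_def] using h.symm

lemma su2_norm (A : SU2) :
    su2Mat A 0 0 * star (su2Mat A 0 0) + su2Mat A 0 1 * star (su2Mat A 0 1) = 1 := by
  have hd : (su2Mat A).det = 1 := su2_det A
  rw [Matrix.det_fin_two] at hd
  rw [(su2_form A).1, (su2_form A).2] at hd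
  linear_combination hd

lemma su2_eta (A : SU2) :
    su2Mat A = !![su2Mat A 0 0, su2Mat A 0 1;
      -star (su2Mat A 0 1), star (su2Mat A 0 0)] := by
  rw [← (su2_form A).1, ← (su2_form A).2]
  exact Matrix.etaExpand_eq (su2Mat A) |>.symm

def mkSU2 (u v : ℂ) (h : u * star u + v * star v = 1) : SU2 :=
  ⟨⟨!![u, v; -star v, star u], by
    simp only [RCLike.star_def] at h
    rw [Matrix.mem_unitaryGroup_iff]
    ext i j
    fin_cases i <;> fin_cases j <;>
      simp [Matrix.mul_apply, Fin.sum_univ_two, Matrix.one_apply, RCLike.star_def] <;>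
      first | linear_combination h | linear_combination (0:ℂ) = 0⟩, by
    show (!![u, v; -star v, star u]).det = 1
    rw [Matrix.det_fin_two_of]
    linear_combination h⟩

lemma su2Mat_mkSU2 (u v : ℂ) (h : u * star u + v * star v = 1) :
    su2Mat (mkSU2 u v h) = !![u, v; -star v, star u] := rfl

lemma su2Mat_conj (U A : SU2) :
    su2Mat (U * A * U⁻¹) = su2Mat U * su2Mat A * star (su2Mat U) := rfl

lemma su2_anticomm {A B : SU2} (h : su2Mat (A * B * A⁻¹ * B⁻¹) = -1) :
    su2Mat A * su2Mat B = -(su2Mat B * su2Mat A) := by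
  have h' : su2Mat A * su2Mat B * star (su2Mat A) * star (su2Mat B) = -1 := h
  have h2 := congrArg (· * (su2Mat B * su2Mat A)) h'
  simp only [mul_assoc] at h2
  rw [← mul_assoc (star (su2Mat B)) (su2Mat B) (su2Mat A), su2_star_mul, one_mul,
    su2_star_mul, mul_one, neg_one_mul] at h2
  exact h2

lemma su2_traceA {A B : SU2} (h : su2Mat (A * B * A⁻¹ * B⁻¹) = -1) :
    (su2Mat A).trace = 0 := by
  have key := su2_anticomm h
  have key' : su2Mat B * su2Mat A = -(su2Mat A * su2Mat B) := by rw [key, neg_neg]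
  have t1 : ((su2Mat B * su2Mat A) * star (su2Mat B)).trace = (su2Mat A).trace := by
    rw [Matrix.trace_mul_comm, ← mul_assoc, su2_star_mul, one_mul]
  have t2 : ((su2Mat B * su2Mat A) * star (su2Mat B)).trace = -(su2Mat A).trace := by
    rw [key', neg_mul, Matrix.trace_neg, mul_assoc, su2_mul_star, mul_one]
  have h3 : (su2Mat A).trace = -(su2Mat A).trace := t1.symm.trans t2
  exact add_self_eq_zero.mp (by linear_combination h3)

lemma su2_traceB {A B : SU2} (h : su2Mat (A * B * A⁻¹ * B⁻¹) = -1) :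
    (su2Mat B).trace = 0 := by
  have key := su2_anticomm h
  have t1 : ((su2Mat A * su2Mat B) * star (su2Mat A)).trace = (su2Mat B).trace := by
    rw [Matrix.trace_mul_comm, ← mul_assoc, su2_star_mul, one_mul]
  have t2 : ((su2Mat A * su2Mat B) * star (su2Mat A)).trace = -(su2Mat B).trace := by
    rw [key, neg_mul, Matrix.trace_neg, mul_assoc, su2_mul_star, mul_one]
  exact add_self_eq_zero.mp (by linear_combination t1.symm.trans t2)

lemma conjT2 (u v : ℂ) : star !![u, v; -star v, star u] = !![star u, -v; star v, u] := by
  rw [Matrix.star_eq_conjTranspose]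
  ext i j
  fin_cases i <;> fin_cases j <;> simp [Matrix.conjTranspose_apply]

lemma diag_form (A : SU2) (ht : (su2Mat A).trace = 0) :
    ∃ U : SU2, su2Mat U * su2Mat A * star (su2Mat U) = !![Complex.I, 0; 0, -Complex.I] := by
  have hI : Complex.I ^ 2 = -1 := Complex.I_sq
  set a := su2Mat A 0 0 with ha0
  set b := su2Mat A 0 1 with hb0
  have hA : su2Mat A = !![a, b; -star b, star a] := su2_eta A
  have hn : a * star a + b * star b = 1 := su2_norm A
  have htr : a + star a = 0 := by
    rw [Matrix.trace_fin_two, (su2_form A).1] at ht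
    exact ht
  have hre : a.re = 0 := by
    have h2 : a + (starRingEnd ℂ) a = 0 := htr
    rw [Complex.add_conj] at h2
    have h3 : (2 : ℝ) * a.re = 0 := by exact_mod_cast h2
    linarith
  set α := a.im with hα0
  have ha : a = (α : ℂ) * Complex.I := by
    rw [← Complex.re_add_im a, hre]
    simp
    exact hα0.symm
  have hsa : star a = -((α : ℂ) * Complex.I) := by
    rw [ha, RCLike.star_def, RingHom.map_mul, Complex.conj_ofReal, Complex.conj_I]
    ring
  have hbb : b * star b = 1 - (α : ℂ)^2 := by
    rw [hsa, ha] at hn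
    linear_combination hn + (α:ℂ)^2 * hI
  have hbbR : Complex.normSq b = 1 - α^2 := by
    have h4 : ((Complex.normSq b : ℝ) : ℂ) = ((1 - α^2 : ℝ) : ℂ) := by
      rw [← Complex.mul_conj, ← RCLike.star_def]
      push_cast
      exact hbb
    exact_mod_cast h4
  have hα1 : α^2 ≤ 1 := by nlinarith [Complex.normSq_nonneg b]
  by_cases hαneg : α = -1
  · -- a = -I, b = 0
    have hb : b = 0 := by
      have : Complex.normSq b = 0 := by rw [hbbR, hαneg]; ring
      exact Complex.normSq_eq_zero.mp this
    have haI : a = -Complex.I := by rw [ha, hαneg]; push_cast; ring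
    have hsaI : star a = Complex.I := by rw [hsa, hαneg]; push_cast; ring
    refine ⟨mkSU2 0 1 (by simp), ?_⟩
    rw [su2Mat_mkSU2, hA, hb, hsaI, haI]
    ext i j
    fin_cases i <;> fin_cases j <;>
      simp [Matrix.mul_apply, Fin.sum_univ_two, Matrix.star_eq_conjTranspose,
        Matrix.conjTranspose_apply]
  · have hαlt : -1 < α := lt_of_le_of_ne (by nlinarith) (Ne.symm hαneg)
    have h1p : (0:ℝ) < 1 + α := by linarith
    set x : ℝ := Real.sqrt ((1+α)/2) with hx0
    have hx2R : x^2 = (1+α)/2 := Real.sq_sqrt (by linarith)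
    have hx2 : ((x:ℂ))^2 = (1+(α:ℂ))/2 := by
      have := congrArg (Complex.ofReal) hx2R
      push_cast at this
      exact this
    have h1pC : (1+(α:ℂ)) ≠ 0 := by
      have h5 : ((1+α : ℝ):ℂ) ≠ 0 := Complex.ofReal_ne_zero.mpr (ne_of_gt h1p)
      push_cast at h5
      exact h5
    have hbb' : b * (starRingEnd ℂ) b = 1 - (α:ℂ)^2 := by
      simpa only [RCLike.star_def] using hbb
    set y : ℂ := Complex.I * star b * (x:ℂ) / (1+(α:ℂ)) with hy0
    have hsy : star y = -Complex.I * b * (x:ℂ) / (1+(α:ℂ)) := by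
      rw [hy0]
      simp [RCLike.star_def, map_div₀, Complex.conj_I, Complex.conj_ofReal]
      try ring
    have hy1 : (1+(α:ℂ)) * y = Complex.I * star b * (x:ℂ) := by
      rw [hy0]; field_simp; try ring
    have hy2 : (1+(α:ℂ)) * star y = -Complex.I * b * (x:ℂ) := by
      rw [hsy]; field_simp; try ring
    have hyy : y * star y = (1-(α:ℂ))/2 := by
      rw [hy0, hsy]
      field_simp
      linear_combination (-2*b*star b*((x:ℝ):ℂ)^2) * hI + 2*((x:ℝ):ℂ)^2*hbb
        + 2*(1-(α:ℂ)^2)*hx2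
    have hby : b * y = Complex.I * (1-(α:ℂ)) * (x:ℂ) := by
      rw [hy0]
      field_simp
      linear_combination ((x:ℝ):ℂ) * hbb
    have hby' : star b * star y = -Complex.I * (1-(α:ℂ)) * (x:ℂ) := by
      rw [hsy]
      field_simp
      linear_combination -((x:ℝ):ℂ) * hbb
    have hnormU : (x:ℂ) * star (x:ℂ) + star y * star (star y) = 1 := by
      rw [star_star]
      simp only [RCLike.star_def, Complex.conj_ofReal]
      rw [← RCLike.star_def]
      linear_combination hyy + hx2
    refine ⟨mkSU2 (x:ℂ) (star y) hnormU, ?_⟩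
    have hMU : su2Mat (mkSU2 (x:ℂ) (star y) hnormU) = !![(x:ℂ), star y; -y, (x:ℂ)] := by
      rw [su2Mat_mkSU2, star_star]
      congr 1
      simp [Complex.conj_ofReal]
    have hsMU : star (!![(x:ℂ), star y; -y, (x:ℂ)]) = !![(x:ℂ), -star y; y, (x:ℂ)] := by
      rw [Matrix.star_eq_conjTranspose]
      ext i j
      fin_cases i <;> fin_cases j <;>
        simp [Matrix.conjTranspose_apply, Complex.conj_ofReal]
    rw [hMU, hsMU, hA, hsa, ha]
    simp only [RCLike.star_def] at hby hby' hyy hy1 hy2 hbb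
    ext i j
    fin_cases i <;> fin_cases j <;>
      simp [Matrix.mul_apply, Fin.sum_univ_two] <;>
      [(linear_combination ((x:ℝ):ℂ)*hby - ((x:ℝ):ℂ)*hby' - (α:ℂ)*Complex.I*hyy
          + (2-(α:ℂ))*Complex.I*hx2);
       (linear_combination ((starRingEnd ℂ) y)*hby' + (-Complex.I*((x:ℝ):ℂ))*hy2
          + b*((x:ℝ):ℂ)^2*hI);
       (linear_combination -y*hby + (-Complex.I*((x:ℝ):ℂ))*hy1
          + (-((starRingEnd ℂ) b)*((x:ℝ):ℂ)^2)*hI);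
       (linear_combination -((x:ℝ):ℂ)*hby + ((x:ℝ):ℂ)*hby' + (α:ℂ)*Complex.I*hyy
          - (2-(α:ℂ))*Complex.I*hx2)]

lemma full_form (A B : SU2) (h : su2Mat (A * B * A⁻¹ * B⁻¹) = -1) :
    ∃ U : SU2, su2Mat (U*A*U⁻¹) = !![Complex.I, 0; 0, -Complex.I] ∧
      su2Mat (U*B*U⁻¹) = !![0, 1; -1, 0] := by
  obtain ⟨U₁, hU₁⟩ := diag_form A (su2_traceA h)
  set A₁ := U₁*A*U₁⁻¹ with hA₁def
  set B₁ := U₁*B*U₁⁻¹ with hB₁def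
  have hD : su2Mat A₁ = !![Complex.I, 0; 0, -Complex.I] :=
    (su2Mat_conj U₁ A).trans hU₁
  have hanti : su2Mat A * su2Mat B = -(su2Mat B * su2Mat A) := su2_anticomm h
  have hanti₁ : su2Mat A₁ * su2Mat B₁ = -(su2Mat B₁ * su2Mat A₁) := by
    have e1 : A₁ * B₁ = U₁*(A*B)*U₁⁻¹ := by rw [hA₁def, hB₁def]; group
    have e2 : B₁ * A₁ = U₁*(B*A)*U₁⁻¹ := by rw [hA₁def, hB₁def]; group
    calc su2Mat A₁ * su2Mat B₁ = su2Mat (A₁*B₁) := (su2Mat_mul _ _).symm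
      _ = su2Mat U₁ * (su2Mat A * su2Mat B) * star (su2Mat U₁) := by rw [e1]; rfl
      _ = su2Mat U₁ * (-(su2Mat B * su2Mat A)) * star (su2Mat U₁) := by rw [hanti]
      _ = -(su2Mat U₁ * (su2Mat B * su2Mat A) * star (su2Mat U₁)) := by
          rw [mul_neg, neg_mul]
      _ = -su2Mat (B₁*A₁) := by rw [e2]; rfl
      _ = -(su2Mat B₁ * su2Mat A₁) := by rw [su2Mat_mul]
  set p := su2Mat B₁ 0 0 with hp0
  set q := su2Mat B₁ 0 1 with hq0
  have hB₁ : su2Mat B₁ = !![p, q; -star q, star p] := su2_eta B₁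
  have hp : p = 0 := by
    have e := congrFun (congrFun hanti₁ 0) 0
    rw [hD, hB₁] at e
    simp [Matrix.mul_apply, Fin.sum_univ_two] at e
    have h2 : p * Complex.I = 0 := by linear_combination e / 2
    rcases mul_eq_zero.mp h2 with h3 | h3
    · exact h3
    · exact absurd h3 Complex.I_ne_zero
  have hq : q * star q = 1 := by
    have h4 := su2_norm B₁
    rw [← hp0, ← hq0, hp] at h4
    simpa using h4
  obtain ⟨u, hu⟩ : ∃ u : ℂ, u^2 = star q := by
    rcases IsAlgClosed.exists_pow_nat_eq (star q) (n := 2) (by norm_num) with ⟨z, hz⟩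
    exact ⟨z, hz⟩
  have huu : u * star u = 1 := by
    have h2 : (u * star u)^2 = 1 := by
      have hsp : (star u)^2 = q := by
        rw [← star_pow, hu, star_star]
      calc (u * star u)^2 = u^2 * (star u)^2 := by ring
        _ = star q * q := by rw [hu, hsp]
        _ = 1 := by linear_combination hq
    have h3 : u * star u = ((Complex.normSq u : ℝ) : ℂ) := by
      rw [RCLike.star_def, Complex.mul_conj]
    rw [h3] at h2 ⊢
    have h4 : (Complex.normSq u)^2 = 1 := by exact_mod_cast h2
    have h5 : Complex.normSq u = 1 := by nlinarith [Complex.normSq_nonneg u]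
    rw [h5]; norm_num
  have hW : u * star u + 0 * star 0 = 1 := by simpa using huu
  set W := mkSU2 u 0 hW with hWdef
  have hMW : su2Mat W = !![u, 0; -star 0, star u] := su2Mat_mkSU2 u 0 hW
  refine ⟨W * U₁, ?_, ?_⟩
  · have e : (W*U₁)*A*(W*U₁)⁻¹ = W*A₁*W⁻¹ := by rw [hA₁def]; group
    rw [e, su2Mat_conj, hD, hMW]
    simp only [RCLike.star_def] at huu hu hq ⊢
    ext i j
    fin_cases i <;> fin_cases j <;>
      simp [Matrix.mul_apply, Fin.sum_univ_two, Matrix.star_eq_conjTranspose,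
        Matrix.conjTranspose_apply] <;>
      linear_combination Complex.I * huu
  · have e : (W*U₁)*B*(W*U₁)⁻¹ = W*B₁*W⁻¹ := by rw [hB₁def]; group
    rw [e, su2Mat_conj, hB₁, hp, hMW]
    have hsp2 : (star u)^2 = q := by rw [← star_pow, hu, star_star]
    simp only [RCLike.star_def] at huu hu hq hsp2 ⊢
    ext i j
    fin_cases i <;> fin_cases j <;>
      simp [Matrix.mul_apply, Fin.sum_univ_two, Matrix.star_eq_conjTranspose,
        Matrix.conjTranspose_apply] <;>
      first
      | (linear_combination q * hu + hq)
      | (linear_combination ((starRingEnd ℂ) q) * hsp2 + hq)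
      | (linear_combination (0:ℂ) = 0)

lemma part3 (A B : SU2) (h : su2Mat (A * B * A⁻¹ * B⁻¹) = -1)
    (C : SU2) (hCA : C * A = A * C) (hCB : C * B = B * C) :
    su2Mat C = 1 ∨ su2Mat C = -1 := by
  obtain ⟨U, hDA, hJB⟩ := full_form A B h
  set C₁ := U*C*U⁻¹ with hC₁def
  have eA : C₁ * (U*A*U⁻¹) = (U*A*U⁻¹) * C₁ := by
    rw [hC₁def]
    calc U*C*U⁻¹*(U*A*U⁻¹) = U*(C*A)*U⁻¹ := by group
      _ = U*(A*C)*U⁻¹ := by rw [hCA]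
      _ = (U*A*U⁻¹)*(U*C*U⁻¹) := by group
  have eB : C₁ * (U*B*U⁻¹) = (U*B*U⁻¹) * C₁ := by
    rw [hC₁def]
    calc U*C*U⁻¹*(U*B*U⁻¹) = U*(C*B)*U⁻¹ := by group
      _ = U*(B*C)*U⁻¹ := by rw [hCB]
      _ = (U*B*U⁻¹)*(U*C*U⁻¹) := by group
  have mA : su2Mat C₁ * !![Complex.I, 0; 0, -Complex.I]
      = !![Complex.I, 0; 0, -Complex.I] * su2Mat C₁ := by
    rw [← hDA, ← su2Mat_mul, ← su2Mat_mul, eA]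
  have mB : su2Mat C₁ * !![(0:ℂ), 1; -1, 0] = !![(0:ℂ), 1; -1, 0] * su2Mat C₁ := by
    rw [← hJB, ← su2Mat_mul, ← su2Mat_mul, eB]
  set c := su2Mat C₁ 0 0 with hc0
  set d := su2Mat C₁ 0 1 with hd0
  have hC₁ : su2Mat C₁ = !![c, d; -star d, star c] := su2_eta C₁
  have hd : d = 0 := by
    have e := congrFun (congrFun mA 0) 1
    rw [hC₁] at e
    simp [Matrix.mul_apply, Fin.sum_univ_two] at e
    have h2 : d * Complex.I = 0 := by linear_combination -e / 2
    rcases mul_eq_zero.mp h2 with h3 | h3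
    · exact h3
    · exact absurd h3 Complex.I_ne_zero
  have hcc : c = star c := by
    have e := congrFun (congrFun mB 0) 1
    rw [hC₁] at e
    simpa [Matrix.mul_apply, Fin.sum_univ_two] using e
  have hc2 : c^2 = 1 := by
    have h4 := su2_norm C₁
    rw [← hc0, ← hd0, hd, ← hcc] at h4
    simpa [sq] using h4
  have hcpm : c = 1 ∨ c = -1 := by
    have : (c - 1) * (c + 1) = 0 := by linear_combination hc2
    rcases mul_eq_zero.mp this with h5 | h5
    · left; linear_combination h5
    · right; linear_combination h5
  have eC : C = U⁻¹ * C₁ * U := by rw [hC₁def]; group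
  have eCM : su2Mat C = star (su2Mat U) * su2Mat C₁ * su2Mat U := by
    rw [eC, su2Mat_mul, su2Mat_mul, su2Mat_inv]
  rcases hcpm with hc | hc
  · left
    have hone : su2Mat C₁ = 1 := by
      rw [hC₁, hd, hc]
      ext i j
      fin_cases i <;> fin_cases j <;> simp [Matrix.one_apply]
    rw [eCM, hone, mul_one, su2_star_mul]
  · right
    have hone : su2Mat C₁ = -1 := by
      rw [hC₁, hd, hc]
      ext i j
      fin_cases i <;> fin_cases j <;> simp [Matrix.one_apply]
    rw [eCM, hone, mul_neg, mul_one, neg_mul, su2_star_mul]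

end

/-- **Pairs in SU(2) with commutator `−I`.**  If `A B A⁻¹ B⁻¹ = −I` then
`tr A = tr B = 0` and `A B = −B A`; any two pairs with this property are simultaneously
conjugate in `SU(2)`; and only `±I` commute with both `A` and `B`. -/
theorem su2_commutator_neg_one :
    (∀ A B : SU2, su2Mat (A * B * A⁻¹ * B⁻¹) = -1 →
      (su2Mat A).trace = 0 ∧ (su2Mat B).trace = 0 ∧
        su2Mat A * su2Mat B = -(su2Mat B * su2Mat A)) ∧
    (∀ A B A' B' : SU2, su2Mat (A * B * A⁻¹ * B⁻¹) = -1 →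
      su2Mat (A' * B' * A'⁻¹ * B'⁻¹) = -1 →
      ∃ U : SU2, A' = U * A * U⁻¹ ∧ B' = U * B * U⁻¹) ∧
    (∀ A B : SU2, su2Mat (A * B * A⁻¹ * B⁻¹) = -1 →
      ∀ C : SU2, C * A = A * C → C * B = B * C → su2Mat C = 1 ∨ su2Mat C = -1) := by
  refine ⟨fun A B h => ⟨su2_traceA h, su2_traceB h, su2_anticomm h⟩, ?_, part3⟩
  intro A B A' B' h h'
  obtain ⟨U, hUA, hUB⟩ := full_form A B h
  obtain ⟨V, hVA, hVB⟩ := full_form A' B' h'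
  have eA : U*A*U⁻¹ = V*A'*V⁻¹ := su2Mat_inj (hUA.trans hVA.symm)
  have eB : U*B*U⁻¹ = V*B'*V⁻¹ := su2Mat_inj (hUB.trans hVB.symm)
  refine ⟨V⁻¹*U, ?_, ?_⟩
  · calc A' = V⁻¹*(V*A'*V⁻¹)*V := by group
      _ = V⁻¹*(U*A*U⁻¹)*V := by rw [← eA]
      _ = (V⁻¹*U)*A*(V⁻¹*U)⁻¹ := by group
  · calc B' = V⁻¹*(V*B'*V⁻¹)*V := by group
      _ = V⁻¹*(U*B*U⁻¹)*V := by rw [← eB]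
      _ = (V⁻¹*U)*B*(V⁻¹*U)⁻¹ := by group
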